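/- (Gradient of the energy density; inverse hysteresis operator.) Let E be a finite-dimensional real inner product space, let μ₀ > 0, χ ≥ 0, J_p ∈ E, and let U : E → ℝ be convex and continuous. For B ∈ E let J̃(B) denote the unique minimizer of J ↦ (1/(2μ₀))‖B − J‖² + U(J) + χ‖J − J_p‖, and define the energy density w(B) = (1/(2μ₀))‖B − J̃(B)‖² + U(J̃(B)) + χ‖J̃(B) − J_p‖ (the infimum value). Then for every B ∈ E, w has a gradient at B equal to (1/μ₀)(B − J̃(B)), i.e., HasGradientAt w ((1/μ₀) • (B − J̃ B)) B. -/

import Mathlib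

open RealInnerProductSpace

/-- Auxiliary: gradient of a Moreau-type envelope along its (given) minimizer map. -/
theorem aux_moreau_gradient
    {E : Type*} [NormedAddCommGroup E] [InnerProductSpace ℝ E] [CompleteSpace E]
    (c : ℝ) (hc : 0 < c) (φ : E → ℝ) (hφ : ConvexOn ℝ Set.univ φ)
    (Jt : E → E)
    (hmin : ∀ B J : E, c * ‖B - Jt B‖ ^ 2 + φ (Jt B) ≤ c * ‖B - J‖ ^ 2 + φ J) :
    ∀ B : E, HasGradientAt (fun B' : E => c * ‖B' - Jt B'‖ ^ 2 + φ (Jt B'))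
      ((2 * c) • (B - Jt B)) B := by
  -- strong minimality
  have hstrong : ∀ (B' J : E),
      c * ‖B' - Jt B'‖ ^ 2 + φ (Jt B') + (c / 2) * ‖J - Jt B'‖ ^ 2
        ≤ c * ‖B' - J‖ ^ 2 + φ J := by
    intro B' J
    set m : E := (1/2 : ℝ) • J + (1/2 : ℝ) • Jt B' with hm
    have hminm := hmin B' m
    have hφm : φ m ≤ (1/2) * φ J + (1/2) * φ (Jt B') := by
      have := hφ.2 (Set.mem_univ J) (Set.mem_univ (Jt B'))
        (by norm_num : (0:ℝ) ≤ 1/2) (by norm_num : (0:ℝ) ≤ 1/2) (by norm_num)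
      rw [hm]
      simpa [smul_eq_mul] using this
    have h1 : B' - m = (1/2:ℝ) • ((B' - J) + (B' - Jt B')) := by
      rw [hm]; module
    have hq1 : ‖B' - m‖ ^ 2 = (1/4) * ‖(B' - J) + (B' - Jt B')‖ ^ 2 := by
      rw [h1, norm_smul, mul_pow, Real.norm_eq_abs]
      rw [abs_of_nonneg (by norm_num : (0:ℝ) ≤ 1/2)]
      ring
    have hq2 : ‖J - Jt B'‖ ^ 2 = ‖(B' - Jt B') - (B' - J)‖ ^ 2 := by
      rw [show (B' - Jt B') - (B' - J) = J - Jt B' by abel]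
    have pu : ‖(B' - J) + (B' - Jt B')‖ ^ 2
        = ‖B' - J‖ ^ 2 + 2 * ⟪B' - J, B' - Jt B'⟫ + ‖B' - Jt B'‖ ^ 2 :=
      norm_add_sq_real _ _
    have pv : ‖(B' - Jt B') - (B' - J)‖ ^ 2
        = ‖B' - Jt B'‖ ^ 2 - 2 * ⟪B' - Jt B', B' - J⟫ + ‖B' - J‖ ^ 2 :=
      norm_sub_sq_real _ _
    have hcomm : ⟪B' - J, B' - Jt B'⟫ = ⟪B' - Jt B', B' - J⟫ := real_inner_comm _ _
    have hquad : ‖B' - m‖ ^ 2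
        = (1/2) * ‖B' - J‖ ^ 2 + (1/2) * ‖B' - Jt B'‖ ^ 2 - (1/4) * ‖J - Jt B'‖ ^ 2 := by
      rw [hq1, hq2, pu, pv, hcomm]; ring
    have hcm : c * ‖B' - m‖ ^ 2
        = (1/2) * (c * ‖B' - J‖ ^ 2) + (1/2) * (c * ‖B' - Jt B'‖ ^ 2)
          - (c/4) * ‖J - Jt B'‖ ^ 2 := by rw [hquad]; ring
    nlinarith [hminm, hφm, hcm]
  -- Lipschitz bound on Jt
  have hLip : ∀ B₁ B₂ : E, ‖Jt B₁ - Jt B₂‖ ≤ 2 * ‖B₁ - B₂‖ := by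
    intro B₁ B₂
    have h1 := hstrong B₁ (Jt B₂)
    have h2 := hstrong B₂ (Jt B₁)
    have e1 : ‖B₁ - Jt B₂‖ ^ 2
        = ‖B₁ - B₂‖ ^ 2 + 2 * ⟪B₁ - B₂, B₂ - Jt B₂⟫ + ‖B₂ - Jt B₂‖ ^ 2 := by
      rw [show B₁ - Jt B₂ = (B₁ - B₂) + (B₂ - Jt B₂) by abel, norm_add_sq_real]
    have e2 : ‖B₂ - Jt B₁‖ ^ 2
        = ‖B₁ - Jt B₁‖ ^ 2 - 2 * ⟪B₁ - Jt B₁, B₁ - B₂⟫ + ‖B₁ - B₂‖ ^ 2 := by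
      rw [show B₂ - Jt B₁ = (B₁ - Jt B₁) - (B₁ - B₂) by abel, norm_sub_sq_real]
    have e3 : ‖Jt B₂ - Jt B₁‖ = ‖Jt B₁ - Jt B₂‖ := norm_sub_rev _ _
    have e4 : ⟪B₁ - B₂, B₂ - Jt B₂⟫ - ⟪B₁ - Jt B₁, B₁ - B₂⟫
        = ⟪B₁ - B₂, Jt B₁ - Jt B₂⟫ - ‖B₁ - B₂‖ ^ 2 := by
      rw [real_inner_comm (B₁ - B₂) (B₁ - Jt B₁), ← inner_sub_right,
        show (B₂ - Jt B₂) - (B₁ - Jt B₁) = (Jt B₁ - Jt B₂) - (B₁ - B₂) by abel,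
        inner_sub_right, real_inner_self_eq_norm_sq]
    have key' : c * ‖Jt B₁ - Jt B₂‖ ^ 2 ≤ c * (2 * ⟪B₁ - B₂, Jt B₁ - Jt B₂⟫) := by
      rw [e1, e3] at h1
      rw [e2] at h2
      nlinarith [h1, h2, e4]
    have key : ‖Jt B₁ - Jt B₂‖ ^ 2 ≤ 2 * ⟪B₁ - B₂, Jt B₁ - Jt B₂⟫ :=
      le_of_mul_le_mul_left key' hc
    have hCS : ⟪B₁ - B₂, Jt B₁ - Jt B₂⟫ ≤ ‖B₁ - B₂‖ * ‖Jt B₁ - Jt B₂‖ :=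
      real_inner_le_norm _ _
    nlinarith [norm_nonneg (Jt B₁ - Jt B₂), norm_nonneg (B₁ - B₂), key, hCS]
  -- upper quadratic bound on w
  have hup : ∀ B₁ B₂ : E,
      c * ‖B₂ - Jt B₂‖ ^ 2 + φ (Jt B₂)
        ≤ (c * ‖B₁ - Jt B₁‖ ^ 2 + φ (Jt B₁))
          + 2 * c * ⟪B₁ - Jt B₁, B₂ - B₁⟫ + c * ‖B₂ - B₁‖ ^ 2 := by
    intro B₁ B₂
    have h1 := hmin B₂ (Jt B₁)
    have e1 : ‖B₂ - Jt B₁‖ ^ 2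
        = ‖B₂ - B₁‖ ^ 2 + 2 * ⟪B₂ - B₁, B₁ - Jt B₁⟫ + ‖B₁ - Jt B₁‖ ^ 2 := by
      rw [show B₂ - Jt B₁ = (B₂ - B₁) + (B₁ - Jt B₁) by abel, norm_add_sq_real]
    have hcomm : ⟪B₂ - B₁, B₁ - Jt B₁⟫ = ⟪B₁ - Jt B₁, B₂ - B₁⟫ := real_inner_comm _ _
    rw [e1, hcomm] at h1
    nlinarith [h1]
  intro B
  rw [hasGradientAt_iff_isLittleO, Asymptotics.isLittleO_iff]
  intro ε hε
  have hKpos : (0:ℝ) < 8 * c := by positivity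
  rw [Metric.eventually_nhds_iff]
  refine ⟨ε / (8 * c), by positivity, fun B' hB' => ?_⟩
  have hg : ⟪(2 * c) • (B - Jt B), B' - B⟫ = 2 * c * ⟪B - Jt B, B' - B⟫ := by
    rw [real_inner_smul_left]
  have hU1 := hup B B'
  have hU2 := hup B' B
  -- rewrite the inner product appearing in hU2
  have esub : ⟪(B' - Jt B') - (B - Jt B), B' - B⟫
      = ⟪B' - Jt B', B' - B⟫ - ⟪B - Jt B, B' - B⟫ := inner_sub_left _ _ _
  have eneg : ⟪B' - Jt B', B - B'⟫ = - ⟪B' - Jt B', B' - B⟫ := by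
    rw [show B - B' = -(B' - B) by abel, inner_neg_right]
  have hX : |⟪(B' - Jt B') - (B - Jt B), B' - B⟫| ≤ 3 * ‖B' - B‖ ^ 2 := by
    have hcs := abs_real_inner_le_norm ((B' - Jt B') - (B - Jt B)) (B' - B)
    have hn : ‖(B' - Jt B') - (B - Jt B)‖ ≤ 3 * ‖B' - B‖ := by
      calc ‖(B' - Jt B') - (B - Jt B)‖
          = ‖(B' - B) - (Jt B' - Jt B)‖ := by rw [show (B' - Jt B') - (B - Jt B)
              = (B' - B) - (Jt B' - Jt B) by abel]
        _ ≤ ‖B' - B‖ + ‖Jt B' - Jt B‖ := norm_sub_le _ _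
        _ ≤ ‖B' - B‖ + 2 * ‖B' - B‖ := by linarith [hLip B' B]
        _ = 3 * ‖B' - B‖ := by ring
    nlinarith [norm_nonneg (B' - B), hcs, hn]
  have habs1 := (abs_le.mp hX).1
  have habs2 := (abs_le.mp hX).2
  have hnorm_rev : ‖B - B'‖ = ‖B' - B‖ := norm_sub_rev _ _
  have hquadbound : |(c * ‖B' - Jt B'‖ ^ 2 + φ (Jt B')) - (c * ‖B - Jt B‖ ^ 2 + φ (Jt B))
      - ⟪(2 * c) • (B - Jt B), B' - B⟫| ≤ 8 * c * ‖B' - B‖ ^ 2 := by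
    rw [hg, abs_le]
    constructor
    · rw [eneg, hnorm_rev] at hU2
      have esub' : 2 * c * ⟪(B' - Jt B') - (B - Jt B), B' - B⟫
          = 2 * c * ⟪B' - Jt B', B' - B⟫ - 2 * c * ⟪B - Jt B, B' - B⟫ := by
        rw [esub]; ring
      have hmul : 2 * c * (-(3 * ‖B' - B‖ ^ 2))
          ≤ 2 * c * ⟪(B' - Jt B') - (B - Jt B), B' - B⟫ :=
        mul_le_mul_of_nonneg_left habs1 (by positivity)
      have hsq : 0 ≤ c * ‖B' - B‖ ^ 2 := mul_nonneg hc.le (sq_nonneg _)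
      linarith [hU2, esub', hmul, hsq]
    · have hsq : 0 ≤ c * ‖B' - B‖ ^ 2 := mul_nonneg hc.le (sq_nonneg _)
      linarith [hU1, hsq]
  calc ‖(c * ‖B' - Jt B'‖ ^ 2 + φ (Jt B')) - (c * ‖B - Jt B‖ ^ 2 + φ (Jt B))
        - ⟪(2 * c) • (B - Jt B), B' - B⟫‖
      ≤ 8 * c * ‖B' - B‖ ^ 2 := hquadbound
    _ = (8 * c * ‖B' - B‖) * ‖B' - B‖ := by ring
    _ ≤ ε * ‖B' - B‖ := by
        apply mul_le_mul_of_nonneg_right _ (norm_nonneg _)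
        rw [dist_eq_norm] at hB'
        calc 8 * c * ‖B' - B‖ ≤ 8 * c * (ε / (8 * c)) :=
              mul_le_mul_of_nonneg_left (le_of_lt hB') (le_of_lt hKpos)
          _ = ε := by field_simp

/-- the inverse hysteresis operator `H = (1/μ₀)(B − J̃(B; J_p))` is the
gradient of the energy density `w(B; J_p)`. -/
theorem inverse_operator_gradient_of_energy
    {E : Type*} [NormedAddCommGroup E] [InnerProductSpace ℝ E] [FiniteDimensional ℝ E]
    (μ₀ : ℝ) (hμ₀ : 0 < μ₀) (χ : ℝ) (hχ : 0 ≤ χ) (Jp : E)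
    (U : E → ℝ) (hUconv : ConvexOn ℝ Set.univ U) (hUcont : Continuous U)
    (Jtilde : E → E)
    (hJtilde : ∀ B : E, ∀ J : E,
      1 / (2 * μ₀) * ‖B - Jtilde B‖ ^ 2 + U (Jtilde B) + χ * ‖Jtilde B - Jp‖
        ≤ 1 / (2 * μ₀) * ‖B - J‖ ^ 2 + U J + χ * ‖J - Jp‖) :
    ∀ B : E, HasGradientAt
      (fun B' : E =>
        1 / (2 * μ₀) * ‖B' - Jtilde B'‖ ^ 2 + U (Jtilde B') + χ * ‖Jtilde B' - Jp‖)
      ((1 / μ₀) • (B - Jtilde B)) B := by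
  have hnconv : ConvexOn ℝ Set.univ (fun J : E => χ * ‖J - Jp‖) := by
    refine ⟨convex_univ, ?_⟩
    intro x _ y _ a b ha hb hab
    have hrw : a • x + b • y - Jp = a • (x - Jp) + b • (y - Jp) := by
      have hJ : a • Jp + b • Jp = Jp := by rw [← add_smul, hab, one_smul]
      have h2 : a • (x - Jp) + b • (y - Jp) = a • x + b • y - (a • Jp + b • Jp) := by
        rw [smul_sub, smul_sub]; abel
      rw [h2, hJ]
    simp only [smul_eq_mul]
    calc χ * ‖a • x + b • y - Jp‖ = χ * ‖a • (x - Jp) + b • (y - Jp)‖ := by rw [hrw]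
      _ ≤ χ * (‖a • (x - Jp)‖ + ‖b • (y - Jp)‖) :=
          mul_le_mul_of_nonneg_left (norm_add_le _ _) hχ
      _ = χ * (a * ‖x - Jp‖ + b * ‖y - Jp‖) := by
          rw [norm_smul, norm_smul, Real.norm_eq_abs, Real.norm_eq_abs,
            abs_of_nonneg ha, abs_of_nonneg hb]
      _ = a * (χ * ‖x - Jp‖) + b * (χ * ‖y - Jp‖) := by ring
  have hφ : ConvexOn ℝ Set.univ (fun J : E => U J + χ * ‖J - Jp‖) := by
    refine ⟨convex_univ, ?_⟩
    intro x hx y hy a b ha hb hab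
    have h1 := hUconv.2 hx hy ha hb hab
    have h2 := hnconv.2 hx hy ha hb hab
    simp only [smul_eq_mul] at h1 h2 ⊢
    linarith
  have hmin : ∀ B J : E,
      1 / (2 * μ₀) * ‖B - Jtilde B‖ ^ 2 + (U (Jtilde B) + χ * ‖Jtilde B - Jp‖)
        ≤ 1 / (2 * μ₀) * ‖B - J‖ ^ 2 + (U J + χ * ‖J - Jp‖) := by
    intro B J; have := hJtilde B J; linarith
  have haux := aux_moreau_gradient (1 / (2 * μ₀)) (by positivity)
    (fun J : E => U J + χ * ‖J - Jp‖) hφ Jtilde hmin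
  intro B
  have hfun : (fun B' : E =>
      1 / (2 * μ₀) * ‖B' - Jtilde B'‖ ^ 2 + U (Jtilde B') + χ * ‖Jtilde B' - Jp‖)
      = (fun B' : E => 1 / (2 * μ₀) * ‖B' - Jtilde B'‖ ^ 2
          + (U (Jtilde B') + χ * ‖Jtilde B' - Jp‖)) := by
    funext B'; ring
  have hcoef : (1 / μ₀ : ℝ) = 2 * (1 / (2 * μ₀)) := by field_simp
  rw [hfun, hcoef]
  exact haux B
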